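/- arXiv:1903.04242 — 2 statements merged into one kernel-verified Lean document; each statement's English description precedes it below -/
import Mathlib

section
/- Let u, V : [0,∞) → ℂ be measurable with |u(x)| ≤ C(1+x)^{−2−ε} and |V(x)| ≤ C(1+x)^{−1−ε} for some C, ε > 0, and set V_u(x) := ∫ₓ^∞ u(y) dy. Then for all x₀ ≥ 0 and k > 0, ∫_{x₀}^∞ (sin(k(x₁−x₀))/k) u(x₁) W[V](x₁,k) dx₁ = W[V_u, V](x₀,k) − W[V_u ⋆ V](x₀,k). -/
open MeasureTheory Set Filter

namespace SuWAux

lemma decay_hasDeriv {p : ℝ} (hp : 1 < p) {y : ℝ} (hy : -1 < y) :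
    HasDerivAt (fun z : ℝ => -(1 + z) ^ (1 - p) / (p - 1)) ((1 + y) ^ (-p)) y := by
  have h1 : (0:ℝ) < 1 + y := by linarith
  have hbase : HasDerivAt (fun z : ℝ => 1 + z) 1 y := (hasDerivAt_id y).const_add 1
  have h2 : HasDerivAt (fun z : ℝ => (1 + z) ^ (1 - p))
      ((1 - p) * (1 + y) ^ (1 - p - 1) * 1) y :=
    (Real.hasDerivAt_rpow_const (x := 1 + y) (p := 1 - p) (Or.inl h1.ne')).comp y hbase
  have h3 : HasDerivAt (fun z : ℝ => -(1 + z) ^ (1 - p) / (p - 1))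
      (-((1 - p) * (1 + y) ^ (1 - p - 1) * 1) / (p - 1)) y := (h2.neg).div_const (p - 1)
  convert h3 using 1
  have hpe : p - 1 ≠ 0 := by intro h; linarith [sub_eq_zero.mp h]
  rw [show (1:ℝ) - p - 1 = -p by ring, eq_div_iff hpe]
  ring

lemma decay_tendsto {p : ℝ} (hp : 1 < p) :
    Tendsto (fun z : ℝ => -(1 + z) ^ (1 - p) / (p - 1)) atTop (nhds 0) := by
  have h1 : Tendsto (fun z : ℝ => (1 + z)) atTop atTop := tendsto_atTop_add_const_left _ 1 tendsto_id
  have h2 : Tendsto (fun w : ℝ => w ^ (-(p - 1))) atTop (nhds 0) :=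
    tendsto_rpow_neg_atTop (by linarith)
  have h3 : Tendsto (fun z : ℝ => (1 + z) ^ (1 - p)) atTop (nhds 0) := by
    have := h2.comp h1
    simpa [Function.comp_def, show -(p-1) = 1 - p by ring] using this
  simpa using (h3.neg).div_const (p - 1)

lemma decay_integrableOn {p : ℝ} (hp : 1 < p) {t : ℝ} (ht : -1 < t) :
    IntegrableOn (fun y : ℝ => (1 + y) ^ (-p)) (Ioi t) := by
  refine integrableOn_Ioi_deriv_of_nonneg' (g := fun z : ℝ => -(1 + z) ^ (1 - p) / (p - 1))
    (fun x hx => decay_hasDeriv hp (by simp at hx; linarith)) ?_ (decay_tendsto hp)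
  intro x hx
  have : (0:ℝ) < 1 + x := by simp at hx; linarith
  positivity

lemma decay_integral {p : ℝ} (hp : 1 < p) {t : ℝ} (ht : -1 < t) :
    ∫ y in Ioi t, (1 + y) ^ (-p) = (1 + t) ^ (1 - p) / (p - 1) := by
  have h := integral_Ioi_of_hasDerivAt_of_tendsto
    (f := fun z : ℝ => -(1 + z) ^ (1 - p) / (p - 1)) (f' := fun y : ℝ => (1 + y) ^ (-p))
    (a := t) ?_ (fun x hx => decay_hasDeriv hp (by simp at hx; linarith))
    (decay_integrableOn hp ht) (decay_tendsto hp)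
  · rw [h]; ring
  · exact ((decay_hasDeriv hp ht).continuousAt).continuousWithinAt

lemma integrableOn_of_decay {f : ℝ → ℂ} {t : ℝ} (ht : 0 ≤ t)
    (hm : AEStronglyMeasurable f (volume.restrict (Ioi t)))
    {C p : ℝ} (hp : 1 < p) (hb : ∀ x : ℝ, 0 ≤ x → ‖f x‖ ≤ C * (1 + x) ^ (-p)) :
    IntegrableOn f (Ioi t) := by
  refine Integrable.mono' ((decay_integrableOn hp (by linarith)).const_mul C) hm ?_
  refine (ae_restrict_iff' measurableSet_Ioi).2 (ae_of_all _ fun x hx => ?_)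
  exact hb x (le_trans ht (le_of_lt hx))

lemma Vu_sm {u : ℝ → ℂ} (hu : Measurable u) {Vu : ℝ → ℂ}
    (hVu : ∀ x : ℝ, Vu x = ∫ y in Ioi x, u y) : StronglyMeasurable Vu := by
  have h : Vu = fun x => ∫ y, ({q : ℝ × ℝ | q.1 < q.2}.indicator (fun q => u q.2)) (x, y) := by
    funext x
    rw [hVu x, ← integral_indicator measurableSet_Ioi]
    refine integral_congr_ae (ae_of_all _ fun y => ?_)
    by_cases hxy : x < y <;>
      simp [Set.indicator_apply, mem_Ioi, Set.mem_setOf_eq, hxy]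
  rw [h]
  exact StronglyMeasurable.integral_prod_right'
    ((hu.stronglyMeasurable.comp_measurable measurable_snd).indicator
      (measurableSet_lt measurable_fst measurable_snd))

lemma Vu_bound {u : ℝ → ℂ} (hu : Measurable u) {C ε : ℝ} (hε : 0 < ε)
    (hub : ∀ x : ℝ, 0 ≤ x → ‖u x‖ ≤ C * (1 + x) ^ (-(2 + ε)))
    {Vu : ℝ → ℂ} (hVu : ∀ x : ℝ, Vu x = ∫ y in Ioi x, u y) :
    ∀ x : ℝ, 0 ≤ x → ‖Vu x‖ ≤ (C / (1 + ε)) * (1 + x) ^ (-(1 + ε)) := by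
  intro x hx
  rw [hVu x]
  have hint : IntegrableOn u (Ioi x) :=
    integrableOn_of_decay hx hu.aestronglyMeasurable (by linarith) hub
  calc ‖∫ y in Ioi x, u y‖ ≤ ∫ y in Ioi x, ‖u y‖ := norm_integral_le_integral_norm _
    _ ≤ ∫ y in Ioi x, C * (1 + y) ^ (-(2 + ε)) := by
        refine setIntegral_mono_on hint.norm
          ((decay_integrableOn (by linarith) (by linarith)).const_mul C)
          measurableSet_Ioi fun y hy => ?_
        exact hub y (le_trans hx (le_of_lt hy))
    _ = (C / (1 + ε)) * (1 + x) ^ (-(1 + ε)) := by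
        rw [MeasureTheory.integral_const_mul, decay_integral (by linarith) (by linarith)]
        rw [show (1 : ℝ) - (2 + ε) = -(1 + ε) by ring]
        rw [show (2 : ℝ) + ε - 1 = 1 + ε by ring]
        ring

lemma integrable_prod_bound {s t : Set ℝ} (hs : MeasurableSet s) (ht : MeasurableSet t)
    {F : ℝ × ℝ → ℂ}
    (hm : AEStronglyMeasurable F ((volume.restrict s).prod (volume.restrict t)))
    {g h : ℝ → ℝ} (hg : IntegrableOn g s) (hh : IntegrableOn h t)
    (hbd : ∀ p : ℝ × ℝ, p.1 ∈ s → p.2 ∈ t → ‖F p‖ ≤ g p.1 * h p.2) :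
    Integrable F ((volume.restrict s).prod (volume.restrict t)) := by
  refine Integrable.mono' (g := fun p : ℝ × ℝ => g p.1 * h p.2) (hg.mul_prod hh) hm ?_
  rw [Measure.prod_restrict]
  refine (ae_restrict_iff' (hs.prod ht)).2 (ae_of_all _ ?_)
  intro p hp
  exact hbd p hp.1 hp.2

lemma swap_tri {s t : Set ℝ} (hs : MeasurableSet s) (ht : MeasurableSet t)
    {F : ℝ → ℝ → ℂ}
    (hF : Integrable (fun p : ℝ × ℝ => (Ioi p.1).indicator (F p.1) p.2)
      ((volume.restrict s).prod (volume.restrict t))) :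
    ∫ x in s, ∫ y in t ∩ Ioi x, F x y = ∫ y in t, ∫ x in s ∩ Iio y, F x y := by
  have h1 : ∀ x : ℝ, ∫ y in t ∩ Ioi x, F x y = ∫ y in t, (Ioi x).indicator (F x) y :=
    fun x => (setIntegral_indicator measurableSet_Ioi).symm
  have h2 : ∀ y : ℝ, ∫ x in s ∩ Iio y, F x y =
      ∫ x in s, (Ioi x).indicator (F x) y := by
    intro y
    rw [← setIntegral_indicator measurableSet_Iio]
    refine setIntegral_congr_fun hs (fun x _ => ?_)
    by_cases hxy : x < y
    · rw [Set.indicator_of_mem (mem_Iio.2 hxy), Set.indicator_of_mem (mem_Ioi.2 hxy)]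
    · rw [Set.indicator_of_notMem (by simpa using hxy),
        Set.indicator_of_notMem (by simpa using hxy)]
  simp_rw [h1, h2]
  exact integral_integral_swap hF

lemma integrable_tri {s t : Set ℝ} (hs : MeasurableSet s) (ht : MeasurableSet t)
    {F : ℝ → ℝ → ℂ}
    (hFm : AEStronglyMeasurable (fun p : ℝ × ℝ => F p.1 p.2)
      ((volume.restrict s).prod (volume.restrict t)))
    {g h : ℝ → ℝ} (hg : IntegrableOn g s) (hh : IntegrableOn h t)
    (hgh : ∀ x ∈ s, ∀ y ∈ t, 0 ≤ g x * h y)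
    (hbd : ∀ x ∈ s, ∀ y ∈ t, x < y → ‖F x y‖ ≤ g x * h y) :
    Integrable (fun p : ℝ × ℝ => (Ioi p.1).indicator (F p.1) p.2)
      ((volume.restrict s).prod (volume.restrict t)) := by
  have hEq : (fun p : ℝ × ℝ => (Ioi p.1).indicator (F p.1) p.2)
      = {q : ℝ × ℝ | q.1 < q.2}.indicator (fun p => F p.1 p.2) := by
    funext p
    by_cases hp : p.1 < p.2 <;> simp [Set.indicator_apply, hp]
  rw [hEq]
  refine integrable_prod_bound hs ht
    (hFm.indicator (measurableSet_lt measurable_fst measurable_snd)) hg hh ?_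
  intro p hp1 hp2
  by_cases hp : p.1 < p.2
  · rw [Set.indicator_of_mem (show p ∈ {q : ℝ × ℝ | q.1 < q.2} from hp)]
    exact hbd _ hp1 _ hp2 hp
  · rw [Set.indicator_of_notMem (show p ∉ {q : ℝ × ℝ | q.1 < q.2} from hp)]
    simpa using hgh _ hp1 _ hp2

lemma eval_sin {c : ℝ} (hc : c ≠ 0) (d a b : ℝ) (hab : a ≤ b) :
    ∫ x in Ioo a b, Real.sin (c * x + d) =
      (Real.cos (c * a + d) - Real.cos (c * b + d)) / c := by
  rw [← integral_Ioc_eq_integral_Ioo, ← intervalIntegral.integral_of_le hab,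
    intervalIntegral.integral_comp_mul_add Real.sin hc d, integral_sin]
  rw [smul_eq_mul]
  field_simp

lemma cosdiff_le {k : ℝ} (hk : 0 < k) (a b : ℝ) :
    |(Real.cos a - Real.cos b) / (2 * k)| ≤ k⁻¹ := by
  rw [abs_div, abs_of_pos (by positivity : (0:ℝ) < 2 * k)]
  rw [div_le_iff₀ (by positivity)]
  have hki : k⁻¹ * (2 * k) = 2 := by field_simp
  calc |Real.cos a - Real.cos b| ≤ |Real.cos a| + |Real.cos b| := abs_sub _ _
    _ ≤ 2 := by linarith [Real.abs_cos_le_one a, Real.abs_cos_le_one b]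
    _ = k⁻¹ * (2 * k) := hki.symm

lemma trig_id {k : ℝ} (hk : 0 < k) (c x₀ y x₂ : ℝ) :
    (Real.cos (k * (2 * x₂ - 2 * y + x₀) - c) - Real.cos (k * (2 * x₂ - x₀) - c)) / (2 * k)
      = Real.sin (k * (y - x₀)) * Real.sin (k * (2 * x₂ - y) - c) / k := by
  rw [Real.cos_sub_cos]
  have h1 : (k * (2 * x₂ - 2 * y + x₀) - c + (k * (2 * x₂ - x₀) - c)) / 2
      = k * (2 * x₂ - y) - c := by ring
  have h2 : (k * (2 * x₂ - 2 * y + x₀) - c - (k * (2 * x₂ - x₀) - c)) / 2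
      = -(k * (y - x₀)) := by ring
  rw [h1, h2, Real.sin_neg]
  field_simp

noncomputable def Phi (k c x₀ y x₂ : ℝ) : ℝ :=
  (Real.cos (k * (2 * x₂ - 2 * min x₂ y + x₀) - c) - Real.cos (k * (2 * x₂ - x₀) - c)) / (2 * k)

noncomputable def Gf (k c x₀ x₂ : ℝ) : ℝ :=
  (Real.cos (k * x₀ - c) - Real.cos (k * (2 * x₂ - x₀) - c)) / (2 * k)

noncomputable def KLf (k c x₀ y x₂ : ℝ) : ℝ :=
  Real.sin (k * (y - x₀)) * Real.sin (k * (2 * x₂ - y) - c) / k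

lemma Phi_eq_Gf {k : ℝ} (c x₀ : ℝ) {y x₂ : ℝ} (h : x₂ ≤ y) :
    Phi k c x₀ y x₂ = Gf k c x₀ x₂ := by
  unfold Phi Gf
  rw [min_eq_left h]
  norm_num

lemma Phi_eq_KLf {k : ℝ} (hk : 0 < k) (c x₀ : ℝ) {y x₂ : ℝ} (h : y ≤ x₂) :
    Phi k c x₀ y x₂ = KLf k c x₀ y x₂ := by
  unfold Phi KLf
  rw [min_eq_right h]
  exact trig_id hk c x₀ y x₂

lemma abs_Phi_le {k : ℝ} (hk : 0 < k) (c x₀ y x₂ : ℝ) : |Phi k c x₀ y x₂| ≤ k⁻¹ :=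
  cosdiff_le hk _ _

lemma abs_Gf_le {k : ℝ} (hk : 0 < k) (c x₀ x₂ : ℝ) : |Gf k c x₀ x₂| ≤ k⁻¹ :=
  cosdiff_le hk _ _

lemma abs_KLf_le {k : ℝ} (hk : 0 < k) (c x₀ y x₂ : ℝ) : |KLf k c x₀ y x₂| ≤ k⁻¹ := by
  unfold KLf
  rw [abs_div, abs_of_pos hk, div_le_iff₀ hk, abs_mul, inv_mul_cancel₀ (ne_of_gt hk)]
  calc |Real.sin (k * (y - x₀))| * |Real.sin (k * (2 * x₂ - y) - c)| ≤ 1 * 1 :=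
        mul_le_mul (Real.abs_sin_le_one _) (Real.abs_sin_le_one _) (abs_nonneg _) zero_le_one
    _ = 1 := one_mul 1

lemma continuous_Phi (k c x₀ : ℝ) : Continuous (fun p : ℝ × ℝ => Phi k c x₀ p.1 p.2) := by
  unfold Phi; fun_prop

lemma continuous_Gf (k c x₀ : ℝ) : Continuous (Gf k c x₀) := by
  unfold Gf; fun_prop

lemma continuous_KLf (k c x₀ : ℝ) : Continuous (fun p : ℝ × ℝ => KLf k c x₀ p.1 p.2) := by
  unfold KLf; fun_prop

lemma continuous_Phi_y (k c x₀ y : ℝ) : Continuous (Phi k c x₀ y) := by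
  unfold Phi; fun_prop

lemma continuous_KLf_y (k c x₀ y : ℝ) : Continuous (KLf k c x₀ y) := by
  unfold KLf; fun_prop

lemma continuous_Phi_swap (k c x₀ : ℝ) : Continuous (fun p : ℝ × ℝ => Phi k c x₀ p.2 p.1) := by
  unfold Phi; fun_prop

lemma continuous_Gf_fst (k c x₀ : ℝ) : Continuous (fun p : ℝ × ℝ => Gf k c x₀ p.1) := by
  unfold Gf; fun_prop

lemma integral_ofReal' {f : ℝ → ℝ} {μ : Measure ℝ} :
    ∫ x, ((f x : ℝ) : ℂ) ∂μ = ((∫ x, f x ∂μ : ℝ) : ℂ) := integral_ofReal (𝕜 := ℂ)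

lemma norm_mul_mul_le {a b : ℂ} {s A B S : ℝ} (ha : ‖a‖ ≤ A) (hb : ‖b‖ ≤ B) (hs : |s| ≤ S) :
    ‖a * b * (s : ℂ)‖ ≤ A * B * S := by
  have hA : 0 ≤ A := le_trans (norm_nonneg a) ha
  have hB : 0 ≤ B := le_trans (norm_nonneg b) hb
  rw [norm_mul, norm_mul, Complex.norm_real]
  exact mul_le_mul (mul_le_mul ha hb (norm_nonneg b) hA) hs (abs_nonneg s)
    (mul_nonneg hA hB)

noncomputable def PsiB (V : ℝ → ℂ) (k c x₀ y : ℝ) : ℂ :=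
  ∫ x₂ in Ioi x₀, V x₂ * ((Phi k c x₀ y x₂ : ℝ) : ℂ)
noncomputable def PsiD (V : ℝ → ℂ) (k c x₀ y : ℝ) : ℂ :=
  ∫ x₂ in Ioo x₀ y, V x₂ * ((Gf k c x₀ x₂ : ℝ) : ℂ)
noncomputable def PsiA (V : ℝ → ℂ) (k c x₀ y : ℝ) : ℂ :=
  ∫ x₂ in Ioi y, V x₂ * ((KLf k c x₀ y x₂ : ℝ) : ℂ)

lemma sm_PsiB {V : ℝ → ℂ} (hV : Measurable V) (k c x₀ : ℝ) :
    StronglyMeasurable (PsiB V k c x₀) := by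
  exact StronglyMeasurable.integral_prod_right'
    (f := fun q : ℝ × ℝ => V q.2 * ((Phi k c x₀ q.1 q.2 : ℝ) : ℂ))
    ((hV.stronglyMeasurable.comp_measurable measurable_snd).mul
      (Complex.continuous_ofReal.comp (continuous_Phi k c x₀)).stronglyMeasurable)

lemma sm_PsiD {V : ℝ → ℂ} (hV : Measurable V) (k c x₀ : ℝ) :
    StronglyMeasurable (PsiD V k c x₀) := by
  have h : PsiD V k c x₀ = fun y =>
      ∫ x₂ in Ioi x₀, ({q : ℝ × ℝ | q.2 < q.1}.indicator
        (fun q => V q.2 * ((Gf k c x₀ q.2 : ℝ) : ℂ))) (y, x₂) := by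
    funext y
    rw [PsiD, ← Ioi_inter_Iio, ← setIntegral_indicator measurableSet_Iio]
    refine setIntegral_congr_fun measurableSet_Ioi fun x₂ _ => ?_
    by_cases hxy : x₂ < y <;>
      simp [Set.indicator_apply, mem_Iio, Set.mem_setOf_eq, hxy]
  rw [h]
  exact StronglyMeasurable.integral_prod_right'
    (((hV.stronglyMeasurable.comp_measurable measurable_snd).mul
      ((Complex.continuous_ofReal.comp (continuous_Gf k c x₀)).stronglyMeasurable.comp_measurable
        measurable_snd)).indicator (measurableSet_lt measurable_snd measurable_fst))

lemma sm_PsiA {V : ℝ → ℂ} (hV : Measurable V) (k c x₀ : ℝ) :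
    StronglyMeasurable (PsiA V k c x₀) := by
  have h : PsiA V k c x₀ = fun y =>
      ∫ x₂, ({q : ℝ × ℝ | q.1 < q.2}.indicator
        (fun q => V q.2 * ((KLf k c x₀ q.1 q.2 : ℝ) : ℂ))) (y, x₂) := by
    funext y
    rw [PsiA, ← integral_indicator measurableSet_Ioi]
    refine integral_congr_ae (ae_of_all _ fun x₂ => ?_)
    by_cases hxy : y < x₂ <;>
      simp [Set.indicator_apply, mem_Ioi, Set.mem_setOf_eq, hxy]
  rw [h]
  exact StronglyMeasurable.integral_prod_right'
    (((hV.stronglyMeasurable.comp_measurable measurable_snd).mul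
      (Complex.continuous_ofReal.comp (continuous_KLf k c x₀)).stronglyMeasurable).indicator
      (measurableSet_lt measurable_fst measurable_snd))

lemma psi_norm_le {s : Set ℝ} (hs : MeasurableSet s) {V : ℝ → ℂ} (hVi : IntegrableOn V s)
    (hVm : AEStronglyMeasurable V (volume.restrict s))
    {w : ℝ → ℝ} (hwc : Continuous w) {M : ℝ} (hw : ∀ x, |w x| ≤ M) :
    ‖∫ x in s, V x * ((w x : ℝ) : ℂ)‖ ≤ M * ∫ x in s, ‖V x‖ := by
  have hbd : ∀ x : ℝ, ‖V x * ((w x : ℝ) : ℂ)‖ ≤ ‖V x‖ * M := fun x => by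
    rw [norm_mul, Complex.norm_real]
    exact mul_le_mul_of_nonneg_left (hw x) (norm_nonneg _)
  have hint : IntegrableOn (fun x => V x * ((w x : ℝ) : ℂ)) s := by
    refine Integrable.mono' (hVi.norm.mul_const M)
      (hVm.mul (Complex.continuous_ofReal.comp hwc).aestronglyMeasurable)
      (ae_of_all _ fun x => hbd x)
  calc ‖∫ x in s, V x * ((w x : ℝ) : ℂ)‖ ≤ ∫ x in s, ‖V x * ((w x : ℝ) : ℂ)‖ :=
        norm_integral_le_integral_norm _
    _ ≤ ∫ x in s, ‖V x‖ * M :=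
        setIntegral_mono_on hint.norm (hVi.norm.mul_const M) hs (fun x _ => hbd x)
    _ = M * ∫ x in s, ‖V x‖ := by rw [MeasureTheory.integral_mul_const, mul_comm]

end SuWAux
set_option maxHeartbeats 2000000 in
open SuWAux in
/-- The integration-by-parts identity `𝔖_u W[V] = W[V_u, V] − W[V_u ⋆ V]`,
written out with all kernels explicit. -/
theorem Su_W_single
    (v : ℝ → ℝ) (hv_meas : Measurable v) (C₀ ρ : ℝ)
    (hC₀ : 0 < C₀) (hρ : 2 < ρ)
    (hv : ∀ x : ℝ, 0 ≤ x → |v x| ≤ C₀ * (1 + x) ^ (-ρ))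
    (θ : ℝ → ℝ → ℂ)
    (hθcont : ∀ k : ℝ, k ≠ 0 → ContinuousOn (θ k) (Set.Ici 0))
    (hθbdd : ∀ k : ℝ, k ≠ 0 → ∃ M : ℝ, ∀ x : ℝ, 0 ≤ x → ‖θ k x‖ ≤ M)
    (hθeq : ∀ k : ℝ, k ≠ 0 → ∀ x : ℝ, 0 ≤ x →
      θ k x = Complex.exp (Complex.I * k * x) +
        (k : ℂ)⁻¹ * ∫ y in Set.Ioi x,
          Complex.sin ((k : ℂ) * ((x : ℂ) - (y : ℂ))) * (v y : ℂ) * θ k y)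
    (η : ℝ → ℝ)
    (hηcont : ContinuousOn η (Set.Ioi 0))
    (hηlim : Tendsto η atTop (nhds 0))
    (hηeq : ∀ k : ℝ, 0 < k →
      θ k 0 = ((‖θ k 0‖ : ℝ) : ℂ) * Complex.exp (Complex.I * η k))
    (u V : ℝ → ℂ) (humeas : Measurable u) (hVmeas : Measurable V)
    (C ε : ℝ) (hC : 0 < C) (hε : 0 < ε)
    (hu : ∀ x : ℝ, 0 ≤ x → ‖u x‖ ≤ C * (1 + x) ^ (-(2 + ε)))
    (hV : ∀ x : ℝ, 0 ≤ x → ‖V x‖ ≤ C * (1 + x) ^ (-(1 + ε)))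
    (Vu : ℝ → ℂ) (hVu : ∀ x : ℝ, Vu x = ∫ y in Set.Ioi x, u y) :
    ∀ x₀ : ℝ, 0 ≤ x₀ → ∀ k : ℝ, 0 < k →
      (∫ x₁ in Set.Ioi x₀,
          ((Real.sin (k * (x₁ - x₀)) / k : ℝ) : ℂ) * u x₁ *
            ((Real.sqrt (2 / Real.pi) : ℝ) *
              ∫ x₂ in Set.Ioi x₁,
                V x₂ * ((Real.sin (k * (2 * x₂ - x₁) - η k) : ℝ) : ℂ))) =
        (Real.sqrt (2 / Real.pi) : ℝ) *
            (∫ x₁ in Set.Ioi x₀, ∫ x₂ in Set.Ioi x₁,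
              Vu x₁ * V x₂ *
                ((Real.sin (k * (2 * x₂ - 2 * x₁ + x₀) - η k) : ℝ) : ℂ)) -
          (Real.sqrt (2 / Real.pi) : ℝ) *
            ∫ x₁ in Set.Ioi x₀,
              (∫ y in Set.Ioi x₁, Vu y * V y) *
                ((Real.sin (k * (2 * x₁ - x₀) - η k) : ℝ) : ℂ) := by
  intro x₀ hx₀ k hk
  have hkne : k ≠ 0 := ne_of_gt hk
  set c : ℝ := η k with hc
  have hε1 : (1:ℝ) < 1 + ε := by linarith
  have hε2 : (1:ℝ) < 2 + ε := by linarith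
  have hx0' : (-1:ℝ) < x₀ := by linarith
  have hC0 : (0:ℝ) ≤ C := le_of_lt hC
  have hCe : (0:ℝ) ≤ C / (1 + ε) := le_of_lt (div_pos hC (by linarith))
  have hui : IntegrableOn u (Ioi x₀) :=
    integrableOn_of_decay hx₀ humeas.aestronglyMeasurable hε2 hu
  have hVi : IntegrableOn V (Ioi x₀) :=
    integrableOn_of_decay hx₀ hVmeas.aestronglyMeasurable hε1 hV
  have hVusm : StronglyMeasurable Vu := Vu_sm humeas hVu
  have hVub : ∀ x : ℝ, 0 ≤ x → ‖Vu x‖ ≤ (C / (1 + ε)) * (1 + x) ^ (-(1 + ε)) :=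
    Vu_bound humeas hε hu hVu
  have hpos1 : ∀ x ∈ Ioi x₀, (0:ℝ) < 1 + x := fun x hxx => by
    have := mem_Ioi.1 hxx; linarith
  have hub : ∀ x ∈ Ioi x₀, ‖u x‖ ≤ C * (1 + x) ^ (-(2 + ε)) := fun x hxx => by
    exact hu x (le_trans hx₀ (le_of_lt (mem_Ioi.1 hxx)))
  have hVb : ∀ x ∈ Ioi x₀, ‖V x‖ ≤ C * (1 + x) ^ (-(1 + ε)) := fun x hxx => by
    exact hV x (le_trans hx₀ (le_of_lt (mem_Ioi.1 hxx)))
  have hVub' : ∀ x ∈ Ioi x₀, ‖Vu x‖ ≤ (C / (1 + ε)) * (1 + x) ^ (-(1 + ε)) :=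
    fun x hxx => hVub x (le_trans hx₀ (le_of_lt (mem_Ioi.1 hxx)))
  have hdec1 : IntegrableOn (fun x : ℝ => (C / (1 + ε)) * (1 + x) ^ (-(1 + ε))) (Ioi x₀) :=
    (decay_integrableOn hε1 hx0').const_mul _
  have hdec2 : IntegrableOn (fun x : ℝ => C * (1 + x) ^ (-(1 + ε))) (Ioi x₀) :=
    (decay_integrableOn hε1 hx0').const_mul _
  have hdec3 : IntegrableOn (fun x : ℝ => C * (1 + x) ^ (-(2 + ε))) (Ioi x₀) :=
    (decay_integrableOn hε2 hx0').const_mul _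
  have hdec2k : IntegrableOn (fun x : ℝ => (C * (1 + x) ^ (-(1 + ε))) * k⁻¹) (Ioi x₀) :=
    hdec2.mul_const _
  have hg1nn : ∀ x ∈ Ioi x₀, (0:ℝ) ≤ (C / (1 + ε)) * (1 + x) ^ (-(1 + ε)) := fun x hxx =>
    mul_nonneg hCe (Real.rpow_nonneg (le_of_lt (hpos1 x hxx)) _)
  have hg2nn : ∀ x ∈ Ioi x₀, (0:ℝ) ≤ C * (1 + x) ^ (-(1 + ε)) := fun x hxx =>
    mul_nonneg hC0 (Real.rpow_nonneg (le_of_lt (hpos1 x hxx)) _)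
  have hg3nn : ∀ x ∈ Ioi x₀, (0:ℝ) ≤ C * (1 + x) ^ (-(2 + ε)) := fun x hxx =>
    mul_nonneg hC0 (Real.rpow_nonneg (le_of_lt (hpos1 x hxx)) _)
  set MV : ℝ := ∫ x in Ioi x₀, ‖V x‖ with hMVdef
  have hMV : (0:ℝ) ≤ MV := integral_nonneg fun x => norm_nonneg _
  -- bounds on the Ψ functions
  have hPsiAb : ∀ y ∈ Ioi x₀, ‖PsiA V k c x₀ y‖ ≤ k⁻¹ * MV := by
    intro y hy
    have h1 : ‖PsiA V k c x₀ y‖ ≤ k⁻¹ * ∫ x₂ in Ioi y, ‖V x₂‖ :=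
      psi_norm_le measurableSet_Ioi (hVi.mono_set (Ioi_subset_Ioi (le_of_lt (mem_Ioi.1 hy))))
        hVmeas.aestronglyMeasurable
        (continuous_KLf_y k c x₀ y)
        (fun x₂ => abs_KLf_le hk c x₀ y x₂)
    refine le_trans h1 (mul_le_mul_of_nonneg_left ?_ (by positivity))
    exact setIntegral_mono_set hVi.norm (ae_of_all _ fun x => norm_nonneg _)
      ((Ioi_subset_Ioi (le_of_lt (mem_Ioi.1 hy))).eventuallyLE)
  have hPsiDb : ∀ y ∈ Ioi x₀, ‖PsiD V k c x₀ y‖ ≤ k⁻¹ * MV := by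
    intro y hy
    have h1 : ‖PsiD V k c x₀ y‖ ≤ k⁻¹ * ∫ x₂ in Ioo x₀ y, ‖V x₂‖ :=
      psi_norm_le measurableSet_Ioo (hVi.mono_set Ioo_subset_Ioi_self)
        hVmeas.aestronglyMeasurable (continuous_Gf k c x₀)
        (fun x₂ => abs_Gf_le hk c x₀ x₂)
    refine le_trans h1 (mul_le_mul_of_nonneg_left ?_ (by positivity))
    exact setIntegral_mono_set hVi.norm (ae_of_all _ fun x => norm_nonneg _)
      (Ioo_subset_Ioi_self.eventuallyLE)
  have hPsiBb : ∀ y ∈ Ioi x₀, ‖PsiB V k c x₀ y‖ ≤ k⁻¹ * MV := by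
    intro y _
    exact psi_norm_le measurableSet_Ioi hVi hVmeas.aestronglyMeasurable
      (continuous_Phi_y k c x₀ y)
      (fun x₂ => abs_Phi_le hk c x₀ y x₂)
  have hIpsi : ∀ P : ℝ → ℂ, StronglyMeasurable P → (∀ y ∈ Ioi x₀, ‖P y‖ ≤ k⁻¹ * MV) →
      IntegrableOn (fun y => u y * P y) (Ioi x₀) := by
    intro P hPm hPb
    refine Integrable.mono' (hui.norm.mul_const (k⁻¹ * MV))
      (humeas.aestronglyMeasurable.mul hPm.aestronglyMeasurable) ?_
    refine (ae_restrict_iff' measurableSet_Ioi).2 (ae_of_all _ fun y hy => ?_)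
    rw [norm_mul]
    exact mul_le_mul_of_nonneg_left (hPb y hy) (norm_nonneg _)
  have hIA : IntegrableOn (fun y => u y * PsiA V k c x₀ y) (Ioi x₀) :=
    hIpsi _ (sm_PsiA hVmeas k c x₀) hPsiAb
  have hID : IntegrableOn (fun y => u y * PsiD V k c x₀ y) (Ioi x₀) :=
    hIpsi _ (sm_PsiD hVmeas k c x₀) hPsiDb
  -- splitting identity
  have hsplit : ∀ y ∈ Ioi x₀, PsiB V k c x₀ y = PsiD V k c x₀ y + PsiA V k c x₀ y := by
    intro y hy
    have hy' : x₀ < y := mem_Ioi.1 hy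
    have hcont : Continuous fun x₂ : ℝ => ((Phi k c x₀ y x₂ : ℝ) : ℂ) :=
      Complex.continuous_ofReal.comp (continuous_Phi_y k c x₀ y)
    have hVPhi : IntegrableOn (fun x₂ => V x₂ * ((Phi k c x₀ y x₂ : ℝ) : ℂ)) (Ioi x₀) := by
      refine Integrable.mono' (hVi.norm.mul_const k⁻¹)
        (hVmeas.aestronglyMeasurable.mul hcont.aestronglyMeasurable)
        (ae_of_all _ fun x₂ => ?_)
      rw [norm_mul, Complex.norm_real]
      exact mul_le_mul_of_nonneg_left (abs_Phi_le hk c x₀ y x₂) (norm_nonneg _)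
    unfold PsiB PsiD PsiA
    rw [← Ioc_union_Ioi_eq_Ioi (le_of_lt hy'),
      setIntegral_union Ioc_disjoint_Ioi_same measurableSet_Ioi
        (hVPhi.mono_set Ioc_subset_Ioi_self) (hVPhi.mono_set (Ioi_subset_Ioi (le_of_lt hy')))]
    congr 1
    · rw [integral_Ioc_eq_integral_Ioo]
      refine setIntegral_congr_fun measurableSet_Ioo fun x₂ hx₂ => ?_
      rw [Phi_eq_Gf c x₀ (le_of_lt hx₂.2)]
    · refine setIntegral_congr_fun measurableSet_Ioi fun x₂ hx₂ => ?_
      rw [Phi_eq_KLf hk c x₀ (le_of_lt (mem_Ioi.1 hx₂))]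
  -- the B-term
  have hF1 : Integrable (fun p : ℝ × ℝ => (Ioi p.1).indicator
      (fun x₂ => Vu p.1 * V x₂ * ((Real.sin (k * (2 * x₂ - 2 * p.1 + x₀) - c) : ℝ) : ℂ)) p.2)
      ((volume.restrict (Ioi x₀)).prod (volume.restrict (Ioi x₀))) := by
    refine integrable_tri measurableSet_Ioi measurableSet_Ioi
      (F := fun x₁ x₂ => Vu x₁ * V x₂ * ((Real.sin (k * (2 * x₂ - 2 * x₁ + x₀) - c) : ℝ) : ℂ))
      ?_ hdec1 hdec2
      (fun x hx y hy => mul_nonneg (hg1nn x hx) (hg2nn y hy)) ?_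
    · have hcont : Continuous fun p : ℝ × ℝ =>
          ((Real.sin (k * (2 * p.2 - 2 * p.1 + x₀) - c) : ℝ) : ℂ) := by fun_prop
      exact (((hVusm.comp_measurable measurable_fst).mul
        (hVmeas.stronglyMeasurable.comp_measurable measurable_snd)).mul
        hcont.stronglyMeasurable).aestronglyMeasurable
    · intro x hx y hy _
      calc ‖Vu x * V y * ((Real.sin (k * (2 * y - 2 * x + x₀) - c) : ℝ) : ℂ)‖
          ≤ ((C / (1 + ε)) * (1 + x) ^ (-(1 + ε))) * (C * (1 + y) ^ (-(1 + ε))) * 1 :=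
            norm_mul_mul_le (hVub' x hx) (hVb y hy) (Real.abs_sin_le_one _)
        _ = ((C / (1 + ε)) * (1 + x) ^ (-(1 + ε))) * (C * (1 + y) ^ (-(1 + ε))) := mul_one _
  have hF3 : Integrable (fun p : ℝ × ℝ => u p.2 * V p.1 * ((Phi k c x₀ p.2 p.1 : ℝ) : ℂ))
      ((volume.restrict (Ioi x₀)).prod (volume.restrict (Ioi x₀))) := by
    refine integrable_prod_bound measurableSet_Ioi measurableSet_Ioi ?_ hdec2k hdec3 ?_
    · have hcont : Continuous fun p : ℝ × ℝ => ((Phi k c x₀ p.2 p.1 : ℝ) : ℂ) :=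
        Complex.continuous_ofReal.comp (continuous_Phi_swap k c x₀)
      exact (((humeas.stronglyMeasurable.comp_measurable measurable_snd).mul
        (hVmeas.stronglyMeasurable.comp_measurable measurable_fst)).mul
        hcont.stronglyMeasurable).aestronglyMeasurable
    · intro p hp1 hp2
      calc ‖u p.2 * V p.1 * ((Phi k c x₀ p.2 p.1 : ℝ) : ℂ)‖
          ≤ (C * (1 + p.2) ^ (-(2 + ε))) * (C * (1 + p.1) ^ (-(1 + ε))) * k⁻¹ :=
            norm_mul_mul_le (hub p.2 hp2) (hVb p.1 hp1) (abs_Phi_le hk c x₀ p.2 p.1)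
        _ = (C * (1 + p.1) ^ (-(1 + ε))) * k⁻¹ * (C * (1 + p.2) ^ (-(2 + ε))) := by ring
  have hB : (∫ x₁ in Ioi x₀, ∫ x₂ in Ioi x₁,
        Vu x₁ * V x₂ * ((Real.sin (k * (2 * x₂ - 2 * x₁ + x₀) - c) : ℝ) : ℂ))
      = ∫ z in Ioi x₀, u z * PsiB V k c x₀ z := by
    calc ∫ x₁ in Ioi x₀, ∫ x₂ in Ioi x₁,
          Vu x₁ * V x₂ * ((Real.sin (k * (2 * x₂ - 2 * x₁ + x₀) - c) : ℝ) : ℂ)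
        = ∫ x₁ in Ioi x₀, ∫ x₂ in Ioi x₀ ∩ Ioi x₁,
            Vu x₁ * V x₂ * ((Real.sin (k * (2 * x₂ - 2 * x₁ + x₀) - c) : ℝ) : ℂ) := by
          refine setIntegral_congr_fun measurableSet_Ioi fun x₁ hx₁ => ?_
          rw [Ioi_inter_Ioi, sup_eq_right.2 (le_of_lt (mem_Ioi.1 hx₁))]
      _ = ∫ x₂ in Ioi x₀, ∫ x₁ in Ioi x₀ ∩ Iio x₂,
            Vu x₁ * V x₂ * ((Real.sin (k * (2 * x₂ - 2 * x₁ + x₀) - c) : ℝ) : ℂ) :=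
          swap_tri measurableSet_Ioi measurableSet_Ioi hF1
      _ = ∫ x₂ in Ioi x₀, ∫ z in Ioi x₀, u z * V x₂ * ((Phi k c x₀ z x₂ : ℝ) : ℂ) := by
          refine setIntegral_congr_fun measurableSet_Ioi fun x₂ hx₂ => ?_
          rw [Ioi_inter_Iio]
          have hF2 : Integrable (fun p : ℝ × ℝ => (Ioi p.1).indicator
              (fun z => u z * (V x₂ * ((Real.sin (k * (2 * x₂ - 2 * p.1 + x₀) - c) : ℝ) : ℂ))) p.2)
              ((volume.restrict (Ioo x₀ x₂)).prod (volume.restrict (Ioi x₀))) := by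
            refine integrable_tri measurableSet_Ioo measurableSet_Ioi
              (F := fun x₁ z => u z * (V x₂ * ((Real.sin (k * (2 * x₂ - 2 * x₁ + x₀) - c) : ℝ) : ℂ)))
              ?_ (g := fun _ => ‖V x₂‖) (h := fun z => C * (1 + z) ^ (-(2 + ε)))
              (integrableOn_const measure_Ioo_lt_top.ne) hdec3
              (fun a _ z hz => mul_nonneg (norm_nonneg _) (hg3nn z hz)) ?_
            · have hcont : Continuous fun p : ℝ × ℝ =>
                  (V x₂ * ((Real.sin (k * (2 * x₂ - 2 * p.1 + x₀) - c) : ℝ) : ℂ)) := by fun_prop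
              exact ((humeas.stronglyMeasurable.comp_measurable measurable_snd).mul
                hcont.stronglyMeasurable).aestronglyMeasurable
            · intro a _ z hz _
              show ‖u z * (V x₂ * ((Real.sin (k * (2 * x₂ - 2 * a + x₀) - c) : ℝ) : ℂ))‖
                ≤ ‖V x₂‖ * (C * (1 + z) ^ (-(2 + ε)))
              rw [← mul_assoc]
              calc ‖u z * V x₂ * ((Real.sin (k * (2 * x₂ - 2 * a + x₀) - c) : ℝ) : ℂ)‖
                  ≤ (C * (1 + z) ^ (-(2 + ε))) * ‖V x₂‖ * 1 :=
                    norm_mul_mul_le (hub z hz) le_rfl (Real.abs_sin_le_one _)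
                _ = ‖V x₂‖ * (C * (1 + z) ^ (-(2 + ε))) := by ring
          calc ∫ x₁ in Ioo x₀ x₂,
                Vu x₁ * V x₂ * ((Real.sin (k * (2 * x₂ - 2 * x₁ + x₀) - c) : ℝ) : ℂ)
              = ∫ x₁ in Ioo x₀ x₂, ∫ z in Ioi x₀ ∩ Ioi x₁,
                  u z * (V x₂ * ((Real.sin (k * (2 * x₂ - 2 * x₁ + x₀) - c) : ℝ) : ℂ)) := by
                refine setIntegral_congr_fun measurableSet_Ioo fun x₁ hx₁ => ?_
                rw [Ioi_inter_Ioi, sup_eq_right.2 (le_of_lt hx₁.1), mul_assoc, hVu x₁,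
                  ← MeasureTheory.integral_mul_const]
            _ = ∫ z in Ioi x₀, ∫ x₁ in Ioo x₀ x₂ ∩ Iio z,
                  u z * (V x₂ * ((Real.sin (k * (2 * x₂ - 2 * x₁ + x₀) - c) : ℝ) : ℂ)) :=
                swap_tri measurableSet_Ioo measurableSet_Ioi hF2
            _ = ∫ z in Ioi x₀, u z * V x₂ * ((Phi k c x₀ z x₂ : ℝ) : ℂ) := by
                refine setIntegral_congr_fun measurableSet_Ioi fun z hz => ?_
                rw [show Ioo x₀ x₂ ∩ Iio z = Ioo x₀ (min x₂ z) by
                  ext r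
                  simp only [mem_inter_iff, mem_Ioo, mem_Iio, lt_min_iff]
                  tauto]
                have harg : ∀ x₁ : ℝ, k * (2 * x₂ - 2 * x₁ + x₀) - c
                    = -(2 * k) * x₁ + (k * (2 * x₂ + x₀) - c) := fun x₁ => by ring
                simp_rw [harg, ← mul_assoc]
                rw [MeasureTheory.integral_const_mul, integral_ofReal',
                  eval_sin (neg_ne_zero.2 (mul_ne_zero two_ne_zero hkne)) _ _ _
                    (le_of_lt (lt_min (mem_Ioi.1 hx₂) (mem_Ioi.1 hz)))]
                congr 1
                rw [show -(2 * k) * x₀ + (k * (2 * x₂ + x₀) - c) = k * (2 * x₂ - x₀) - c by ring,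
                  show -(2 * k) * min x₂ z + (k * (2 * x₂ + x₀) - c)
                    = k * (2 * x₂ - 2 * min x₂ z + x₀) - c by ring]
                norm_cast
                unfold Phi
                field_simp
                ring
      _ = ∫ z in Ioi x₀, ∫ x₂ in Ioi x₀, u z * V x₂ * ((Phi k c x₀ z x₂ : ℝ) : ℂ) :=
          integral_integral_swap hF3
      _ = ∫ z in Ioi x₀, u z * PsiB V k c x₀ z := by
          refine setIntegral_congr_fun measurableSet_Ioi fun z _ => ?_
          unfold PsiB
          simp_rw [mul_assoc]
          rw [MeasureTheory.integral_const_mul]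
  -- the D-term
  have hF4 : Integrable (fun p : ℝ × ℝ => (Ioi p.1).indicator
      (fun y => Vu y * V y * ((Real.sin (k * (2 * p.1 - x₀) - c) : ℝ) : ℂ)) p.2)
      ((volume.restrict (Ioi x₀)).prod (volume.restrict (Ioi x₀))) := by
    refine integrable_tri measurableSet_Ioi measurableSet_Ioi
      (F := fun x₁ y => Vu y * V y * ((Real.sin (k * (2 * x₁ - x₀) - c) : ℝ) : ℂ))
      ?_ hdec1 hdec2
      (fun x hx y hy => mul_nonneg (hg1nn x hx) (hg2nn y hy)) ?_
    · have hcont : Continuous fun p : ℝ × ℝ =>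
          ((Real.sin (k * (2 * p.1 - x₀) - c) : ℝ) : ℂ) := by fun_prop
      exact (((hVusm.comp_measurable measurable_snd).mul
        (hVmeas.stronglyMeasurable.comp_measurable measurable_snd)).mul
        hcont.stronglyMeasurable).aestronglyMeasurable
    · intro x hx y hy hlt
      have h1x : (0:ℝ) < 1 + x := hpos1 x hx
      have hxy : (1 + y) ^ (-(1 + ε)) ≤ (1 + x) ^ (-(1 + ε)) :=
        Real.rpow_le_rpow_of_nonpos h1x (by linarith) (by linarith)
      have h1 : ‖Vu y‖ ≤ (C / (1 + ε)) * (1 + x) ^ (-(1 + ε)) :=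
        le_trans (hVub' y hy) (mul_le_mul_of_nonneg_left hxy hCe)
      calc ‖Vu y * V y * ((Real.sin (k * (2 * x - x₀) - c) : ℝ) : ℂ)‖
          ≤ ((C / (1 + ε)) * (1 + x) ^ (-(1 + ε))) * (C * (1 + y) ^ (-(1 + ε))) * 1 :=
            norm_mul_mul_le h1 (hVb y hy) (Real.abs_sin_le_one _)
        _ = ((C / (1 + ε)) * (1 + x) ^ (-(1 + ε))) * (C * (1 + y) ^ (-(1 + ε))) := mul_one _
  have hF5 : Integrable (fun p : ℝ × ℝ => (Ioi p.1).indicator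
      (fun z => u z * (V p.1 * ((Gf k c x₀ p.1 : ℝ) : ℂ))) p.2)
      ((volume.restrict (Ioi x₀)).prod (volume.restrict (Ioi x₀))) := by
    refine integrable_tri measurableSet_Ioi measurableSet_Ioi
      (F := fun y z => u z * (V y * ((Gf k c x₀ y : ℝ) : ℂ)))
      ?_ (g := fun y => (C * (1 + y) ^ (-(1 + ε))) * k⁻¹) (h := fun z => C * (1 + z) ^ (-(2 + ε)))
      hdec2k hdec3
      (fun x hx y hy => mul_nonneg (mul_nonneg (hg2nn x hx) (by positivity)) (hg3nn y hy)) ?_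
    · have hcont : Continuous fun p : ℝ × ℝ => ((Gf k c x₀ p.1 : ℝ) : ℂ) :=
        Complex.continuous_ofReal.comp (continuous_Gf_fst k c x₀)
      exact ((humeas.stronglyMeasurable.comp_measurable measurable_snd).mul
        ((hVmeas.stronglyMeasurable.comp_measurable measurable_fst).mul
          hcont.stronglyMeasurable)).aestronglyMeasurable
    · intro x hx y hy _
      show ‖u y * (V x * ((Gf k c x₀ x : ℝ) : ℂ))‖
        ≤ (C * (1 + x) ^ (-(1 + ε))) * k⁻¹ * (C * (1 + y) ^ (-(2 + ε)))
      rw [← mul_assoc]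
      calc ‖u y * V x * ((Gf k c x₀ x : ℝ) : ℂ)‖
          ≤ (C * (1 + y) ^ (-(2 + ε))) * (C * (1 + x) ^ (-(1 + ε))) * k⁻¹ :=
            norm_mul_mul_le (hub y hy) (hVb x hx) (abs_Gf_le hk c x₀ x)
        _ = (C * (1 + x) ^ (-(1 + ε))) * k⁻¹ * (C * (1 + y) ^ (-(2 + ε))) := by ring
  have hD : (∫ x₁ in Ioi x₀, (∫ y in Ioi x₁, Vu y * V y) *
        ((Real.sin (k * (2 * x₁ - x₀) - c) : ℝ) : ℂ))
      = ∫ z in Ioi x₀, u z * PsiD V k c x₀ z := by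
    calc ∫ x₁ in Ioi x₀, (∫ y in Ioi x₁, Vu y * V y) *
          ((Real.sin (k * (2 * x₁ - x₀) - c) : ℝ) : ℂ)
        = ∫ x₁ in Ioi x₀, ∫ y in Ioi x₀ ∩ Ioi x₁,
            Vu y * V y * ((Real.sin (k * (2 * x₁ - x₀) - c) : ℝ) : ℂ) := by
          refine setIntegral_congr_fun measurableSet_Ioi fun x₁ hx₁ => ?_
          rw [Ioi_inter_Ioi, sup_eq_right.2 (le_of_lt (mem_Ioi.1 hx₁)),
            ← MeasureTheory.integral_mul_const]
      _ = ∫ y in Ioi x₀, ∫ x₁ in Ioi x₀ ∩ Iio y,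
            Vu y * V y * ((Real.sin (k * (2 * x₁ - x₀) - c) : ℝ) : ℂ) :=
          swap_tri measurableSet_Ioi measurableSet_Ioi hF4
      _ = ∫ y in Ioi x₀, Vu y * V y * ((Gf k c x₀ y : ℝ) : ℂ) := by
          refine setIntegral_congr_fun measurableSet_Ioi fun y hy => ?_
          rw [Ioi_inter_Iio]
          have harg : ∀ x₁ : ℝ, k * (2 * x₁ - x₀) - c
              = 2 * k * x₁ + (-(k * x₀) - c) := fun x₁ => by ring
          simp_rw [harg]
          rw [MeasureTheory.integral_const_mul, integral_ofReal',
            eval_sin (mul_ne_zero two_ne_zero hkne) _ _ _ (le_of_lt (mem_Ioi.1 hy))]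
          congr 1
          rw [show 2 * k * x₀ + (-(k * x₀) - c) = k * x₀ - c by ring,
            show 2 * k * y + (-(k * x₀) - c) = k * (2 * y - x₀) - c by ring]
          norm_cast
      _ = ∫ y in Ioi x₀, ∫ z in Ioi x₀ ∩ Ioi y,
            u z * (V y * ((Gf k c x₀ y : ℝ) : ℂ)) := by
          refine setIntegral_congr_fun measurableSet_Ioi fun y hy => ?_
          rw [Ioi_inter_Ioi, sup_eq_right.2 (le_of_lt (mem_Ioi.1 hy)), mul_assoc, hVu y,
            ← MeasureTheory.integral_mul_const]
      _ = ∫ z in Ioi x₀, ∫ y in Ioi x₀ ∩ Iio z,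
            u z * (V y * ((Gf k c x₀ y : ℝ) : ℂ)) :=
          swap_tri measurableSet_Ioi measurableSet_Ioi hF5
      _ = ∫ z in Ioi x₀, u z * PsiD V k c x₀ z := by
          refine setIntegral_congr_fun measurableSet_Ioi fun z _ => ?_
          rw [Ioi_inter_Iio, MeasureTheory.integral_const_mul]
          rfl
  -- the A-term (left-hand side)
  have hA : (∫ x₁ in Ioi x₀,
        ((Real.sin (k * (x₁ - x₀)) / k : ℝ) : ℂ) * u x₁ *
          (((Real.sqrt (2 / Real.pi) : ℝ) : ℂ) *
            ∫ x₂ in Ioi x₁, V x₂ * ((Real.sin (k * (2 * x₂ - x₁) - c) : ℝ) : ℂ)))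
      = ((Real.sqrt (2 / Real.pi) : ℝ) : ℂ) * ∫ y in Ioi x₀, u y * PsiA V k c x₀ y := by
    rw [← MeasureTheory.integral_const_mul]
    refine setIntegral_congr_fun measurableSet_Ioi fun x₁ _ => ?_
    have h1 : ((Real.sin (k * (x₁ - x₀)) / k : ℝ) : ℂ) *
        ∫ x₂ in Ioi x₁, V x₂ * ((Real.sin (k * (2 * x₂ - x₁) - c) : ℝ) : ℂ)
        = PsiA V k c x₀ x₁ := by
      rw [← MeasureTheory.integral_const_mul]
      unfold PsiA
      refine setIntegral_congr_fun measurableSet_Ioi fun x₂ _ => ?_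
      unfold KLf
      push_cast
      ring
    calc ((Real.sin (k * (x₁ - x₀)) / k : ℝ) : ℂ) * u x₁ *
          (((Real.sqrt (2 / Real.pi) : ℝ) : ℂ) *
            ∫ x₂ in Ioi x₁, V x₂ * ((Real.sin (k * (2 * x₂ - x₁) - c) : ℝ) : ℂ))
        = ((Real.sqrt (2 / Real.pi) : ℝ) : ℂ) *
            (u x₁ * (((Real.sin (k * (x₁ - x₀)) / k : ℝ) : ℂ) *
              ∫ x₂ in Ioi x₁, V x₂ * ((Real.sin (k * (2 * x₂ - x₁) - c) : ℝ) : ℂ))) := by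
          ring
      _ = ((Real.sqrt (2 / Real.pi) : ℝ) : ℂ) * (u x₁ * PsiA V k c x₀ x₁) := by rw [h1]
  -- final assembly
  rw [hA, hB, hD]
  have hsum : (∫ y in Ioi x₀, u y * PsiB V k c x₀ y)
      = (∫ y in Ioi x₀, u y * PsiD V k c x₀ y) + ∫ y in Ioi x₀, u y * PsiA V k c x₀ y := by
    rw [← integral_add hID hIA]
    refine setIntegral_congr_fun measurableSet_Ioi fun y hy => ?_
    rw [hsplit y hy]
    ring
  rw [hsum]
  ring
end

section
/- Let Γ₂ : ℝ → ℂ be defined by Γ₂(α) := tanh(πα) + i / cosh(πα). Then |Γ₂(α)| = 1 for every α ∈ ℝ, Γ₂(α) → ∓1 as α → ∓∞, and the winding number of Γ₂ computed by the integral formula equals −1/2, i.e. (1/(2πi)) ∫_{−∞}^{∞} conj(Γ₂(α)) Γ₂'(α) dα = −1/2. -/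
open MeasureTheory Filter

/-- The curve `Γ₂(α) = tanh(πα) + i/cosh(πα)` arising from the edge
`{−∞} × ℝ` in the topological Levinson theorem (zero-energy-resonance case). -/
noncomputable def Γ₂ (α : ℝ) : ℂ :=
  (Real.tanh (Real.pi * α) : ℝ) + Complex.I / (Real.cosh (Real.pi * α) : ℝ)

lemma Gamma2_eq (α : ℝ) : Γ₂ α =
    ((Real.tanh (Real.pi * α) : ℝ) : ℂ)
      + ((1 / Real.cosh (Real.pi * α) : ℝ) : ℂ) * Complex.I := by
  simp [Γ₂, div_eq_mul_inv, mul_comm]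

lemma cosh_lower (x : ℝ) : 1 + x ^ 2 ≤ Real.cosh (Real.pi * x) := by
  have h1 : Real.cosh (Real.pi * x) = 1 + 2 * Real.sinh (Real.pi * x / 2) ^ 2 := by
    have hd := Real.cosh_two_mul (Real.pi * x / 2)
    rw [show (2:ℝ) * (Real.pi * x / 2) = Real.pi * x by ring] at hd
    nlinarith [Real.cosh_sq (Real.pi * x / 2)]
  have h2 : (Real.pi * x / 2) ^ 2 ≤ Real.sinh (Real.pi * x / 2) ^ 2 := by
    have ha : |Real.pi * x / 2| ≤ Real.sinh |Real.pi * x / 2| :=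
      Real.self_le_sinh_iff.mpr (abs_nonneg _)
    have hb : |Real.sinh (Real.pi * x / 2)| = Real.sinh |Real.pi * x / 2| := Real.abs_sinh _
    nlinarith [abs_nonneg (Real.pi * x / 2), sq_abs (Real.pi * x / 2),
      sq_abs (Real.sinh (Real.pi * x / 2))]
  have hπ3 : (9:ℝ) ≤ Real.pi ^ 2 := by nlinarith [Real.pi_gt_three]
  nlinarith [hπ3, sq_nonneg x]

lemma sech_integral : (∫ α : ℝ, 1 / Real.cosh (Real.pi * α)) = 1 := by
  have hπ := Real.pi_pos
  have hderiv : ∀ α : ℝ, HasDerivAt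
      (fun α : ℝ => (1 / Real.pi) * Real.arctan (Real.sinh (Real.pi * α)))
      (1 / Real.cosh (Real.pi * α)) α := by
    intro α
    have h1 : HasDerivAt (fun α : ℝ => Real.pi * α) Real.pi α := by
      simpa using (hasDerivAt_id α).const_mul Real.pi
    have h2 : HasDerivAt (fun α : ℝ => Real.sinh (Real.pi * α))
        (Real.cosh (Real.pi * α) * Real.pi) α := (Real.hasDerivAt_sinh _).comp α h1
    have h3 := ((Real.hasDerivAt_arctan (Real.sinh (Real.pi * α))).comp α h2).const_mul
      (1 / Real.pi)
    refine h3.congr_deriv ?_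
    have hc := Real.cosh_pos (Real.pi * α)
    have hs : Real.sinh (Real.pi * α) ^ 2 + 1 = Real.cosh (Real.pi * α) ^ 2 :=
      (Real.cosh_sq _).symm
    rw [add_comm (1:ℝ), hs]
    field_simp
  have hπtop : Tendsto (fun α : ℝ => Real.pi * α) atTop atTop :=
    Tendsto.const_mul_atTop hπ tendsto_id
  have hπbot : Tendsto (fun α : ℝ => Real.pi * α) atBot atBot :=
    Tendsto.const_mul_atBot hπ tendsto_id
  have hstop : Tendsto (fun α : ℝ => Real.sinh (Real.pi * α)) atTop atTop := by
    apply tendsto_atTop_mono' _ _ (hπtop)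
    filter_upwards [eventually_ge_atTop (0:ℝ)] with α hα
    exact Real.self_le_sinh_iff.mpr (by positivity)
  have hsbot : Tendsto (fun α : ℝ => Real.sinh (Real.pi * α)) atBot atBot := by
    apply tendsto_atBot_mono' _ _ (hπbot)
    filter_upwards [eventually_le_atBot (0:ℝ)] with α hα
    have h0 : Real.pi * α ≤ 0 := mul_nonpos_of_nonneg_of_nonpos hπ.le hα
    have := Real.self_le_sinh_iff.mpr (neg_nonneg.mpr h0)
    simpa [Real.sinh_neg] using neg_le_neg this
  have htop : Tendsto (fun α : ℝ => (1 / Real.pi) * Real.arctan (Real.sinh (Real.pi * α)))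
      atTop (nhds ((1 / Real.pi) * (Real.pi / 2))) :=
    (((tendsto_nhds_of_tendsto_nhdsWithin Real.tendsto_arctan_atTop).comp hstop).const_mul _)
  have hbot : Tendsto (fun α : ℝ => (1 / Real.pi) * Real.arctan (Real.sinh (Real.pi * α)))
      atBot (nhds ((1 / Real.pi) * (-(Real.pi / 2)))) :=
    (((tendsto_nhds_of_tendsto_nhdsWithin Real.tendsto_arctan_atBot).comp hsbot).const_mul _)
  have hint : Integrable (fun α : ℝ => 1 / Real.cosh (Real.pi * α)) := by
    apply Integrable.mono integrable_inv_one_add_sq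
    · exact (Continuous.div continuous_const
        (Real.continuous_cosh.comp (continuous_const.mul continuous_id))
        (fun x => (Real.cosh_pos _).ne')).aestronglyMeasurable
    · filter_upwards with x
      have h1 : (0:ℝ) < 1 + x ^ 2 := by positivity
      have h2 := cosh_lower x
      rw [Real.norm_eq_abs, Real.norm_eq_abs, abs_of_nonneg (by positivity),
        abs_of_nonneg (by positivity)]
      rw [one_div]
      exact inv_anti₀ h1 (by simpa [sq] using h2)
  have := integral_of_hasDerivAt_of_tendsto hderiv hint hbot htop
  rw [this]
  field_simp
  norm_num


lemma Gamma2_hasDerivAt (α : ℝ) : HasDerivAt Γ₂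
    (((Real.pi / Real.cosh (Real.pi * α) ^ 2 : ℝ) : ℂ)
      + ((-(Real.sinh (Real.pi * α) * Real.pi) / Real.cosh (Real.pi * α) ^ 2 : ℝ) : ℂ)
        * Complex.I) α := by
  have hπ := Real.pi_pos
  have hc := Real.cosh_pos (Real.pi * α)
  have h1 : HasDerivAt (fun α : ℝ => Real.pi * α) Real.pi α := by
    simpa using (hasDerivAt_id α).const_mul Real.pi
  have hs : HasDerivAt (fun α : ℝ => Real.sinh (Real.pi * α))
      (Real.cosh (Real.pi * α) * Real.pi) α := (Real.hasDerivAt_sinh _).comp α h1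
  have hch : HasDerivAt (fun α : ℝ => Real.cosh (Real.pi * α))
      (Real.sinh (Real.pi * α) * Real.pi) α := (Real.hasDerivAt_cosh _).comp α h1
  have ht : HasDerivAt (fun α : ℝ => Real.tanh (Real.pi * α))
      (Real.pi / Real.cosh (Real.pi * α) ^ 2) α := by
    have hdiv := hs.div hch hc.ne'
    have heq : (fun α : ℝ => Real.sinh (Real.pi * α) / Real.cosh (Real.pi * α))
        = fun α : ℝ => Real.tanh (Real.pi * α) :=
      funext fun α => (Real.tanh_eq_sinh_div_cosh _).symm
    simp only [Pi.div_def] at hdiv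
    rw [heq] at hdiv
    refine hdiv.congr_deriv ?_
    have := Real.cosh_sq_sub_sinh_sq (Real.pi * α)
    field_simp
    nlinarith [this]
  have hinv : HasDerivAt (fun α : ℝ => 1 / Real.cosh (Real.pi * α))
      (-(Real.sinh (Real.pi * α) * Real.pi) / Real.cosh (Real.pi * α) ^ 2) α := by
    have := hch.inv hc.ne'
    simpa [one_div, neg_div, Pi.inv_def] using this
  have hC := (ht.ofReal_comp).add ((hinv.ofReal_comp).mul_const Complex.I)
  have heq : (fun α : ℝ => ((Real.tanh (Real.pi * α) : ℝ) : ℂ)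
      + ((1 / Real.cosh (Real.pi * α) : ℝ) : ℂ) * Complex.I) = Γ₂ :=
    funext fun α => (Gamma2_eq α).symm
  rw [← heq]
  exact hC

lemma Gamma2_integrand (α : ℝ) : (starRingEnd ℂ) (Γ₂ α) * deriv Γ₂ α
    = (-(Real.pi : ℂ) * Complex.I) * ((1 / Real.cosh (Real.pi * α) : ℝ) : ℂ) := by
  rw [(Gamma2_hasDerivAt α).deriv, Gamma2_eq α]
  have hc := Real.cosh_pos (Real.pi * α)
  have hc2 : ((Real.cosh (Real.pi * α) : ℝ) : ℂ) ^ 2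
      - ((Real.sinh (Real.pi * α) : ℝ) : ℂ) ^ 2 = 1 := by
    exact_mod_cast Real.cosh_sq_sub_sinh_sq (Real.pi * α)
  have hcne : ((Real.cosh (Real.pi * α) : ℝ) : ℂ) ≠ 0 := by
    exact_mod_cast hc.ne'
  rw [Real.tanh_eq_sinh_div_cosh]
  set s : ℂ := ((Real.sinh (Real.pi * α) : ℝ) : ℂ) with hsdef
  set c : ℂ := ((Real.cosh (Real.pi * α) : ℝ) : ℂ) with hcdef
  simp only [Complex.ofReal_div, Complex.ofReal_one, one_div, Complex.ofReal_inv,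
    Complex.ofReal_neg, Complex.ofReal_mul, Complex.ofReal_pow, map_add, map_mul, map_div₀,
    map_inv₀, Complex.conj_ofReal, Complex.conj_I, ← hsdef, ← hcdef]
  have hconjs : (starRingEnd ℂ) s = s := Complex.conj_ofReal _
  have hconjc : (starRingEnd ℂ) c = c := Complex.conj_ofReal _
  rw [hconjs, hconjc]
  field_simp
  ring_nf
  linear_combination s * Complex.I_sq + Complex.I * hc2

lemma tanh_tendsto_atTop : Tendsto Real.tanh atTop (nhds 1) := by
  have hform : ∀ x : ℝ, Real.tanh x = 1 - 2 / (Real.exp x ^ 2 + 1) := by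
    intro x
    have he := Real.exp_pos x
    have h1 : Real.exp x + (Real.exp x)⁻¹ ≠ 0 := by positivity
    have h2 : Real.exp x ^ 2 + 1 ≠ 0 := by positivity
    rw [Real.tanh_eq_sinh_div_cosh, Real.sinh_eq, Real.cosh_eq, Real.exp_neg]
    field_simp
    ring
  have hd : Tendsto (fun x : ℝ => Real.exp x ^ 2 + 1) atTop atTop := by
    apply tendsto_atTop_add_const_right
    simpa [sq] using Real.tendsto_exp_atTop.atTop_mul_atTop₀ Real.tendsto_exp_atTop
  have h : Tendsto (fun x : ℝ => 1 - 2 / (Real.exp x ^ 2 + 1)) atTop (nhds (1 - 0)) :=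
    tendsto_const_nhds.sub (Tendsto.div_atTop tendsto_const_nhds hd)
  rw [sub_zero] at h
  exact h.congr fun x => (hform x).symm

lemma tanh_tendsto_atBot : Tendsto Real.tanh atBot (nhds (-1)) := by
  have hform : ∀ x : ℝ, Real.tanh x = (Real.exp x ^ 2 - 1) / (Real.exp x ^ 2 + 1) := by
    intro x
    have he := Real.exp_pos x
    have h1 : Real.exp x + (Real.exp x)⁻¹ ≠ 0 := by positivity
    have h2 : Real.exp x ^ 2 + 1 ≠ 0 := by positivity
    rw [Real.tanh_eq_sinh_div_cosh, Real.sinh_eq, Real.cosh_eq, Real.exp_neg]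
    field_simp
  have he : Tendsto (fun x : ℝ => Real.exp x ^ 2) atBot (nhds 0) := by
    simpa [sq] using Real.tendsto_exp_atBot.mul Real.tendsto_exp_atBot
  have h : Tendsto (fun x : ℝ => (Real.exp x ^ 2 - 1) / (Real.exp x ^ 2 + 1)) atBot
      (nhds ((0 - 1) / (0 + 1))) :=
    Tendsto.div ((he.sub_const 1)) (he.add_const 1) (by norm_num)
  norm_num at h
  exact h.congr fun x => (hform x).symm

lemma cosh_tendsto_atTop : Tendsto Real.cosh atTop atTop := by
  apply tendsto_atTop_mono (fun x => ?_) (Real.tendsto_exp_atTop.atTop_div_const two_pos)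
  rw [Real.cosh_eq]
  have := Real.exp_pos (-x)
  linarith

/-- `|Γ₂| ≡ 1`, `Γ₂(α) → ∓1` as `α → ∓∞`, and the winding number of `Γ₂`
computed by the integral formula equals `−1/2`. -/
theorem Gamma2_winding_number :
    (∀ α : ℝ, ‖Γ₂ α‖ = 1) ∧
    Tendsto Γ₂ atBot (nhds (-1)) ∧
    Tendsto Γ₂ atTop (nhds 1) ∧
    (1 / (2 * Real.pi * Complex.I)) *
        (∫ α : ℝ, (starRingEnd ℂ) (Γ₂ α) * deriv Γ₂ α) = -(1 / 2) := by
  have hπ := Real.pi_pos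
  have hπtop : Tendsto (fun α : ℝ => Real.pi * α) atTop atTop :=
    Tendsto.const_mul_atTop hπ tendsto_id
  have hπbot : Tendsto (fun α : ℝ => Real.pi * α) atBot atBot :=
    Tendsto.const_mul_atBot hπ tendsto_id
  have hcoshbot : Tendsto Real.cosh atBot atTop := by
    have := cosh_tendsto_atTop.comp tendsto_neg_atBot_atTop
    refine this.congr fun x => ?_
    simp [Real.cosh_neg]
  have hsech_top : Tendsto (fun α : ℝ => 1 / Real.cosh (Real.pi * α)) atTop (nhds 0) := by
    simpa [one_div, Function.comp_def, Pi.inv_def] using (cosh_tendsto_atTop.comp hπtop).inv_tendsto_atTop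
  have hsech_bot : Tendsto (fun α : ℝ => 1 / Real.cosh (Real.pi * α)) atBot (nhds 0) := by
    simpa [one_div, Function.comp_def, Pi.inv_def] using (hcoshbot.comp hπbot).inv_tendsto_atTop
  refine ⟨?_, ?_, ?_, ?_⟩
  · intro α
    rw [Gamma2_eq α, Complex.norm_add_mul_I]
    have hc := Real.cosh_pos (Real.pi * α)
    have : Real.tanh (Real.pi * α) ^ 2 + (1 / Real.cosh (Real.pi * α)) ^ 2 = 1 := by
      rw [Real.tanh_eq_sinh_div_cosh]
      field_simp
      nlinarith [Real.cosh_sq_sub_sinh_sq (Real.pi * α)]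
    rw [this, Real.sqrt_one]
  · have h1 : Tendsto (fun α : ℝ => ((Real.tanh (Real.pi * α) : ℝ) : ℂ)) atBot
        (nhds ((-1 : ℝ) : ℂ)) :=
      (Complex.continuous_ofReal.tendsto _).comp (tanh_tendsto_atBot.comp hπbot)
    have h2 : Tendsto (fun α : ℝ => ((1 / Real.cosh (Real.pi * α) : ℝ) : ℂ) * Complex.I) atBot
        (nhds (((0 : ℝ) : ℂ) * Complex.I)) :=
      ((Complex.continuous_ofReal.tendsto _).comp hsech_bot).mul_const _
    have h := h1.add h2
    rw [show (((-1 : ℝ) : ℂ) + ((0 : ℝ) : ℂ) * Complex.I) = -1 by push_cast; ring] at h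
    exact h.congr fun α => (Gamma2_eq α).symm
  · have h1 : Tendsto (fun α : ℝ => ((Real.tanh (Real.pi * α) : ℝ) : ℂ)) atTop
        (nhds ((1 : ℝ) : ℂ)) :=
      (Complex.continuous_ofReal.tendsto _).comp (tanh_tendsto_atTop.comp hπtop)
    have h2 : Tendsto (fun α : ℝ => ((1 / Real.cosh (Real.pi * α) : ℝ) : ℂ) * Complex.I) atTop
        (nhds (((0 : ℝ) : ℂ) * Complex.I)) :=
      ((Complex.continuous_ofReal.tendsto _).comp hsech_top).mul_const _
    have h := h1.add h2
    rw [show (((1 : ℝ) : ℂ) + ((0 : ℝ) : ℂ) * Complex.I) = 1 by push_cast; ring] at h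
    exact h.congr fun α => (Gamma2_eq α).symm
  · have hint : (∫ α : ℝ, (starRingEnd ℂ) (Γ₂ α) * deriv Γ₂ α)
        = -(Real.pi : ℂ) * Complex.I := by
      rw [integral_congr_ae (Filter.Eventually.of_forall Gamma2_integrand),
        integral_const_mul]
      rw [show (∫ α : ℝ, ((1 / Real.cosh (Real.pi * α) : ℝ) : ℂ))
          = (((∫ α : ℝ, 1 / Real.cosh (Real.pi * α)) : ℝ) : ℂ) from integral_ofReal,
        sech_integral]
      simp
    rw [hint]
    have hπne : (Real.pi : ℂ) ≠ 0 := Complex.ofReal_ne_zero.mpr hπ.ne'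
    field_simp
end
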